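/- Consider the 3-dimensional Lie algebra ea with basis X₁, X₂, X₃ and only nonzero bracket [X₃, X₁] = X₁. Define t_ε by t_ε(X₂) = εX₂, t_ε(X₁ + X₂) = X₁ + X₂, t_ε(X₃) = -εX₃. Then for all basis elements the limit lim_{ε→0⁺} t_ε⁻¹([t_ε(X), t_ε(Y)]) exists, and the resulting contracted bracket satisfies [X₃, X₁ + X₂]₀ = X₂ with all other brackets among X₂, X₁+X₂, X₃ vanishing; in particular the contracted Lie algebra is isomorphic to the Heisenberg Lie algebra. -/

import Mathlib

open Filter Topology

/-- The IW-contraction of the Lie algebra `ea` (`[X₃,X₁] = X₁`) along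
`t_ε(X₂) = εX₂`, `t_ε(X₁+X₂) = X₁+X₂`, `t_ε(X₃) = −εX₃` exists, satisfies
`[X₃, X₁+X₂]₀ = X₂` with all other brackets among `X₂, X₁+X₂, X₃` vanishing,
and is isomorphic to the Heisenberg Lie algebra (`[Y₃,Y₂] = Y₁`). -/
theorem stmt_1
    (b bH : (Fin 3 → ℝ) →ₗ[ℝ] (Fin 3 → ℝ) →ₗ[ℝ] (Fin 3 → ℝ))
    (X₁ X₂ X₃ : Fin 3 → ℝ)
    (hX₁ : X₁ = ![1,0,0]) (hX₂ : X₂ = ![0,1,0]) (hX₃ : X₃ = ![0,0,1])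
    -- the Lie algebra ea
    (hanti : ∀ x y, b x y = - b y x)
    (h31 : b X₃ X₁ = X₁) (h32 : b X₃ X₂ = 0) (h12 : b X₁ X₂ = 0)
    -- the Heisenberg Lie algebra
    (hHanti : ∀ x y, bH x y = - bH y x)
    (hH32 : bH X₃ X₂ = X₁) (hH31 : bH X₃ X₁ = 0) (hH21 : bH X₂ X₁ = 0)
    -- the contraction maps
    (t : ℝ → ((Fin 3 → ℝ) ≃ₗ[ℝ] (Fin 3 → ℝ)))
    (ht2 : ∀ ε ∈ Set.Ioc (0:ℝ) 1, t ε X₂ = ε • X₂)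
    (ht12 : ∀ ε ∈ Set.Ioc (0:ℝ) 1, t ε (X₁ + X₂) = X₁ + X₂)
    (ht3 : ∀ ε ∈ Set.Ioc (0:ℝ) 1, t ε X₃ = -(ε • X₃)) :
    ∃ b₀ : (Fin 3 → ℝ) →ₗ[ℝ] (Fin 3 → ℝ) →ₗ[ℝ] (Fin 3 → ℝ),
      (∀ x y, Tendsto (fun ε : ℝ => (t ε).symm (b (t ε x) (t ε y)))
        (𝓝[Set.Ioc (0:ℝ) 1] 0) (𝓝 (b₀ x y))) ∧
      b₀ X₃ (X₁ + X₂) = X₂ ∧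
      b₀ X₃ X₂ = 0 ∧ b₀ (X₁ + X₂) X₂ = 0 ∧
      ∃ e : (Fin 3 → ℝ) ≃ₗ[ℝ] (Fin 3 → ℝ), ∀ x y, e (b₀ x y) = bH (e x) (e y) := by
  -- decomposition of a vector in the basis
  have hdec : ∀ v : Fin 3 → ℝ, v = v 0 • X₁ + v 1 • X₂ + v 2 • X₃ := by
    intro v
    subst hX₁ hX₂ hX₃
    funext i; fin_cases i <;> simp
  -- self brackets vanish
  have hbself : ∀ x, b x x = 0 := by
    intro x
    have h := hanti x x
    have h2 : (2:ℝ) • b x x = 0 := by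
      rw [two_smul]; nth_rewrite 1 [h]; abel
    simpa using (smul_eq_zero.mp h2).resolve_left (by norm_num)
  have hHself : ∀ x, bH x x = 0 := by
    intro x
    have h := hHanti x x
    have h2 : (2:ℝ) • bH x x = 0 := by
      rw [two_smul]; nth_rewrite 1 [h]; abel
    simpa using (smul_eq_zero.mp h2).resolve_left (by norm_num)
  -- remaining brackets
  have h13 : b X₁ X₃ = -X₁ := by rw [hanti, h31]
  have h23 : b X₂ X₃ = 0 := by rw [hanti, h32, neg_zero]
  have h21 : b X₂ X₁ = 0 := by rw [hanti, h12, neg_zero]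
  have hH23 : bH X₂ X₃ = -X₁ := by rw [hHanti, hH32]
  have hH13 : bH X₁ X₃ = 0 := by rw [hHanti, hH31, neg_zero]
  have hH12 : bH X₁ X₂ = 0 := by rw [hHanti, hH21, neg_zero]
  -- general formula for b
  have hb : ∀ u v : Fin 3 → ℝ, b u v = (u 2 * v 0 - u 0 * v 2) • X₁ := by
    intro u v
    conv_lhs => rw [hdec u, hdec v]
    simp only [map_add, map_smul, LinearMap.add_apply, LinearMap.smul_apply,
      h31, h32, h12, h13, h23, h21, hbself, smul_zero, add_zero, zero_add,
      smul_neg]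
    module
  -- general formula for bH
  have hbH : ∀ u v : Fin 3 → ℝ, bH u v = (u 2 * v 1 - u 1 * v 2) • X₁ := by
    intro u v
    conv_lhs => rw [hdec u, hdec v]
    simp only [map_add, map_smul, LinearMap.add_apply, LinearMap.smul_apply,
      hH32, hH31, hH21, hH13, hH23, hH12, hHself, smul_zero, add_zero, zero_add,
      smul_neg]
    module
  -- t on X₁
  have ht1 : ∀ ε ∈ Set.Ioc (0:ℝ) 1, t ε X₁ = X₁ + (1 - ε) • X₂ := by
    intro ε hε
    have h := ht12 ε hε
    rw [map_add, ht2 ε hε] at h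
    have : t ε X₁ = X₁ + X₂ - ε • X₂ := by rw [← h]; abel
    rw [this]; module
  -- the key explicit formula
  have key : ∀ ε ∈ Set.Ioc (0:ℝ) 1, ∀ x y : Fin 3 → ℝ,
      (t ε).symm (b (t ε x) (t ε y))
        = (x 0 * y 2 - x 2 * y 0) • (ε • X₁ - (1 - ε) • X₂) := by
    intro ε hε x y
    have hbt : b (t ε x) (t ε y) = (ε * (x 0 * y 2 - x 2 * y 0)) • X₁ := by
      conv_lhs => rw [hdec x, hdec y]
      simp only [map_add, map_smul, LinearMap.add_apply, LinearMap.smul_apply,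
        ht1 ε hε, ht2 ε hε, ht3 ε hε]
      simp only [map_add, map_smul, map_neg, LinearMap.add_apply,
        LinearMap.smul_apply, LinearMap.neg_apply,
        h31, h32, h12, h13, h23, h21, hbself, smul_zero, add_zero, zero_add,
        smul_neg, neg_zero, neg_neg]
      module
    rw [hbt, LinearEquiv.symm_apply_eq, map_smul, map_sub, map_smul, map_smul,
      ht1 ε hε, ht2 ε hε]
    module
  -- the contracted bracket
  refine ⟨LinearMap.mk₂ ℝ (fun x y => (x 2 * y 0 - x 0 * y 2) • X₂)
    (fun m₁ m₂ n => by simp only [Pi.add_apply]; module)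
    (fun c m n => by simp only [Pi.smul_apply, smul_eq_mul]; module)
    (fun m n₁ n₂ => by simp only [Pi.add_apply]; module)
    (fun c m n => by simp only [Pi.smul_apply, smul_eq_mul]; module),
    ?_, ?_, ?_, ?_, ?_⟩
  · intro x y
    simp only [LinearMap.mk₂_apply]
    have hc : Continuous
        (fun ε : ℝ => (x 0 * y 2 - x 2 * y 0) • (ε • X₁ - (1 - ε) • X₂)) := by
      fun_prop
    have hcont : Tendsto
        (fun ε : ℝ => (x 0 * y 2 - x 2 * y 0) • (ε • X₁ - (1 - ε) • X₂))
        (𝓝[Set.Ioc (0:ℝ) 1] 0)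
        (𝓝 ((x 2 * y 0 - x 0 * y 2) • X₂)) := by
      have h0 : (x 0 * y 2 - x 2 * y 0) • ((0:ℝ) • X₁ - (1 - (0:ℝ)) • X₂)
          = (x 2 * y 0 - x 0 * y 2) • X₂ := by module
      exact h0 ▸ (hc.tendsto 0).mono_left nhdsWithin_le_nhds
    refine hcont.congr' ?_
    exact Filter.eventually_of_mem self_mem_nhdsWithin
      (fun ε hε => (key ε hε x y).symm)
  · simp only [LinearMap.mk₂_apply]
    subst hX₁ hX₂ hX₃
    norm_num
    rfl
  · simp only [LinearMap.mk₂_apply]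
    subst hX₁ hX₂ hX₃
    norm_num
  · simp only [LinearMap.mk₂_apply]
    subst hX₁ hX₂ hX₃
    norm_num
    exact ⟨rfl, Subsingleton.elim _ _⟩
  · refine ⟨{ toFun := fun v => ![v 1, v 0, v 2]
              invFun := fun v => ![v 1, v 0, v 2]
              map_add' := by intro u v; funext i; fin_cases i <;> simp
              map_smul' := by intro c v; funext i; fin_cases i <;> simp
              left_inv := by intro v; funext i; fin_cases i <;> simp
              right_inv := by intro v; funext i; fin_cases i <;> simp }, ?_⟩
    intro x y
    simp only [LinearMap.mk₂_apply, LinearEquiv.coe_mk, Equiv.coe_fn_mk, hbH]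
    subst hX₁ hX₂ hX₃
    funext i; fin_cases i <;> simp
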